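/- The set S = Q₇ \ [(1⁴ × Q₃⁻) ∪ {0⁴ × 0³} ∪ {0⁴ × 1³}] can be partitioned into 30 pairwise disjoint 2-dimensional subcubes of Q₇. -/

import Mathlib

set_option maxRecDepth 100000
set_option maxHeartbeats 2000000


/-- A `k`-dimensional subcube of the Boolean cube `{0,1}^n`: a set of points obtained by
fixing `n - k` coordinates to constants and letting the rest vary. -/
def IsSubcube {n : ℕ} (k : ℕ) (S : Set (Fin n → Bool)) : Prop :=
  ∃ (T : Finset (Fin n)) (a : Fin n → Bool),
    T.card = n - k ∧ S = {x | ∀ i ∈ T, x i = a i}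

/-- `Q₃⁻ = {0,1}³ \ {0³, 1³}` does not appear directly here; `Sset` is
`S = Q₇ \ [(1⁴ × Q₃⁻) ∪ {0⁷} ∪ {0⁴ × 1³}]`, where the first four coordinates play the
role of `Q₄` and the last three of `Q₃`. -/
def Sset : Set (Fin 7 → Bool) :=
  {v | ¬ (((∀ i : Fin 7, i.val < 4 → v i = true) ∧
            ¬ (∀ i j : Fin 7, 4 ≤ i.val → 4 ≤ j.val → v i = v j))
        ∨ (∀ i, v i = false)
        ∨ ((∀ i : Fin 7, i.val < 4 → v i = false) ∧
           (∀ i : Fin 7, 4 ≤ i.val → v i = true)))}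

/-- The difference pattern `ρ(x,y) ∈ {0,1}⁷` of `x, y ∈ [n]⁷` : the `i`-th coordinate is
`true` iff `xᵢ ≠ yᵢ`. -/
def rho {n : ℕ} (x y : Fin 7 → Fin n) : Fin 7 → Bool :=
  fun i => decide (x i ≠ y i)

/-- The counterexample graph on `[n]⁷`: `x ~ y` iff `ρ(x,y) ∈ S`. -/
def Gcex (n : ℕ) : SimpleGraph (Fin 7 → Fin n) where
  Adj x y := rho x y ∈ Sset
  symm := by
    constructor
    intro x y h
    have e : rho y x = rho x y := funext fun i => by simp [rho, ne_comm]
    rwa [e]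
  loopless := by
    constructor
    intro x h
    exact h (Or.inr (Or.inl (fun i => by simp [rho])))

/-- The data of the 30 subcubes: fixed coordinate sets and fixed values. -/
def cubeData : Fin 30 → Finset (Fin 7) × (Fin 7 → Bool) :=
  ![({2, 3, 4, 5, 6}, ![false, false, true, true, true, true, true]),
   ({2, 3, 4, 5, 6}, ![false, false, true, true, false, false, false]),
   ({0, 3, 4, 5, 6}, ![false, false, false, true, false, false, true]),
   ({0, 1, 4, 5, 6}, ![true, false, false, false, false, false, true]),
   ({0, 3, 4, 5, 6}, ![false, false, false, false, false, false, true]),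
   ({0, 3, 4, 5, 6}, ![false, false, false, true, false, true, true]),
   ({0, 1, 4, 5, 6}, ![true, false, false, false, false, true, true]),
   ({0, 3, 4, 5, 6}, ![false, false, false, false, false, true, true]),
   ({0, 1, 3, 5, 6}, ![true, true, false, false, false, true, true]),
   ({0, 1, 3, 5, 6}, ![true, true, false, false, false, false, true]),
   ({0, 1, 2, 3, 6}, ![true, true, false, true, false, false, true]),
   ({0, 1, 3, 4, 6}, ![true, false, false, false, true, false, true]),
   ({1, 3, 4, 5, 6}, ![false, false, false, true, true, false, true]),
   ({1, 2, 3, 4, 5}, ![false, false, false, true, true, true, false]),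
   ({0, 1, 4, 5, 6}, ![false, true, false, false, true, false, true]),
   ({0, 1, 3, 4, 5}, ![false, false, false, false, true, false, false]),
   ({0, 1, 2, 4, 5}, ![false, true, false, false, true, true, false]),
   ({0, 2, 3, 4, 5}, ![false, false, true, false, true, true, false]),
   ({1, 2, 3, 5, 6}, ![false, false, false, false, false, true, false]),
   ({0, 2, 3, 5, 6}, ![false, false, true, true, false, true, false]),
   ({0, 1, 2, 5, 6}, ![true, false, true, false, false, true, false]),
   ({0, 2, 3, 4, 6}, ![false, false, true, false, false, false, false]),
   ({0, 3, 4, 5, 6}, ![false, false, false, true, true, false, false]),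
   ({0, 1, 4, 5, 6}, ![true, false, false, false, true, false, false]),
   ({0, 3, 4, 5, 6}, ![true, false, false, false, false, false, false]),
   ({1, 3, 4, 5, 6}, ![false, true, false, false, true, false, false]),
   ({0, 1, 3, 5, 6}, ![true, true, false, false, false, true, false]),
   ({0, 1, 2, 4, 6}, ![false, true, false, false, false, false, false]),
   ({1, 2, 3, 4, 6}, ![false, false, false, true, false, false, false]),
   ({0, 1, 2, 3, 6}, ![true, true, false, true, false, false, false])]

def cubeP (i : Fin 30) (x : Fin 7 → Bool) : Prop :=
  ∀ j ∈ (cubeData i).1, x j = (cubeData i).2 j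

instance (i : Fin 30) (x : Fin 7 → Bool) : Decidable (cubeP i x) := by
  unfold cubeP; infer_instance

/-- The set `S = Q₇ \ [(1⁴ × Q₃⁻) ∪ {0⁷} ∪ {0⁴ × 1³}]` can be partitioned into 30
pairwise disjoint 2-dimensional subcubes of `Q₇`. -/
theorem Sset_partition_thirty_subcubes :
    ∃ C : Fin 30 → Set (Fin 7 → Bool),
      (∀ i, IsSubcube 2 (C i)) ∧
      (Pairwise fun i j => Disjoint (C i) (C j)) ∧
      (⋃ i, C i) = Sset := by
  refine ⟨fun i => {x | cubeP i x}, ?_, ?_, ?_⟩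
  · intro i
    refine ⟨(cubeData i).1, (cubeData i).2, ?_, rfl⟩
    revert i; decide
  · have key : ∀ i j : Fin 30, i ≠ j → ∀ x : Fin 7 → Bool,
        cubeP i x → ¬ cubeP j x := by decide
    intro i j hij
    rw [Set.disjoint_left]
    intro x hx hx'
    exact key i j hij x hx hx'
  · ext x
    simp only [Set.mem_iUnion, Set.mem_setOf_eq]
    have key : ∀ x : Fin 7 → Bool, (∃ i : Fin 30, cubeP i x) ↔
        ¬ (((∀ i : Fin 7, i.val < 4 → x i = true) ∧
            ¬ (∀ i j : Fin 7, 4 ≤ i.val → 4 ≤ j.val → x i = x j))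
        ∨ (∀ i, x i = false)
        ∨ ((∀ i : Fin 7, i.val < 4 → x i = false) ∧
           (∀ i : Fin 7, 4 ≤ i.val → x i = true))) := by decide
    exact key x
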